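/- Let r be an even positive integer and Γ = {0,…,r−1}×{0,…,r−1}. Define C_r = {2cos(πj/r) : j ∈ ℤ, 0 ≤ j ≤ r} and C_Γ = {a + b : a, b ∈ C_r}. Then for every E ∈ (−4,4) with E ∉ C_Γ, the number of eigenvalues of Δ_{0,0}^Γ strictly below E, counted with multiplicity, is odd, and the number of eigenvalues of Δ_{π,π}^Γ strictly below E, counted with multiplicity, is even; in particular these two eigenvalue counts are different, and E is an eigenvalue of neither Δ_{0,0}^Γ nor Δ_{π,π}^Γ. -/

import Mathlib

/-- The Floquet extension: given phases θ, φ and ψ : ℂ^Γ (Γ = {0,…,p−1}×{0,…,q−1},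
identified with Fin p × Fin q), `floquetExt p q θ φ ψ` is the unique function
ψ̃ : ℤ² → ℂ extending ψ and satisfying ψ̃_{n+p,m} = e^{iθ} ψ̃_{n,m} and
ψ̃_{n,m+q} = e^{iφ} ψ̃_{n,m} for all n, m ∈ ℤ. -/
noncomputable def floquetExt (p q : ℕ) [NeZero p] [NeZero q] (θ φ : ℝ)
    (ψ : Fin p × Fin q → ℂ) (nm : ℤ × ℤ) : ℂ :=
  Complex.exp (Complex.I * ((θ : ℂ) * ((nm.1 / (p : ℤ) : ℤ) : ℂ) +
      (φ : ℂ) * ((nm.2 / (q : ℤ) : ℤ) : ℂ))) *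
    ψ (⟨(nm.1 % (p : ℤ)).toNat % p, Nat.mod_lt _ (Nat.pos_of_ne_zero (NeZero.ne p))⟩,
       ⟨(nm.2 % (q : ℤ)).toNat % q, Nat.mod_lt _ (Nat.pos_of_ne_zero (NeZero.ne q))⟩)

set_option linter.unusedSectionVars false

namespace FLaux

variable (r : ℕ) [NeZero r]

noncomputable def zet : ℂ := Complex.exp (Real.pi * Complex.I / r)

lemma zet_ne : zet r ≠ 0 := Complex.exp_ne_zero _

lemma rC_ne : (r : ℂ) ≠ 0 := by
  exact_mod_cast (NeZero.ne r)

lemma zet_pow (a : ℕ) : zet r ^ a = Complex.exp (a * (Real.pi * Complex.I / r)) :=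
  (Complex.exp_nat_mul _ a).symm

lemma zet_pow_mul_r (a : ℕ) : zet r ^ (a * r) = (-1 : ℂ) ^ a := by
  rw [zet_pow]
  have h : ((a * r : ℕ) : ℂ) * (Real.pi * Complex.I / r) = a * (Real.pi * Complex.I) := by
    push_cast
    rw [mul_assoc, mul_div_assoc', mul_div_cancel_left₀ _ (rC_ne r)]
  rw [h, Complex.exp_nat_mul, Complex.exp_pi_mul_I]

noncomputable def ww (a : ℕ) (n : ℤ) : ℂ := (zet r ^ a) ^ n

lemma ww_natCast (a : ℕ) (n : ℕ) : ww r a (n : ℤ) = zet r ^ (a * n) := by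
  rw [ww, zpow_natCast, ← pow_mul]

lemma ww_add_one (a : ℕ) (n : ℤ) : ww r a (n + 1) = ww r a n * zet r ^ a := by
  rw [ww, ww, zpow_add₀ (pow_ne_zero _ (zet_ne r)), zpow_one]

lemma ww_sub_one (a : ℕ) (n : ℤ) : ww r a (n - 1) = ww r a n * (zet r ^ a)⁻¹ := by
  rw [ww, ww, zpow_sub₀ (pow_ne_zero _ (zet_ne r)), zpow_one, div_eq_mul_inv]

lemma coord (a : ℕ) (θ : ℝ) (hθ : Complex.exp (θ * Complex.I) = (-1:ℂ)^a) (n : ℤ) :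
    Complex.exp (Complex.I * ((θ:ℂ) * (((n / (r:ℤ) : ℤ)):ℂ))) *
      zet r ^ (a * ((n % (r:ℤ)).toNat % r)) = ww r a n := by
  have hr0 : 0 < (r:ℤ) := by
    have := NeZero.ne r; omega
  set Q := n / (r:ℤ) with hQ
  set R := n % (r:ℤ) with hR
  have hR0 : 0 ≤ R := Int.emod_nonneg n (by omega)
  have hRlt : R < r := Int.emod_lt_of_pos n hr0
  have hn : n = r * Q + R := (Int.mul_ediv_add_emod n r).symm
  have htn : (R.toNat : ℤ) = R := Int.toNat_of_nonneg hR0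
  have hmod : R.toNat % r = R.toNat := Nat.mod_eq_of_lt (by omega)
  have h1 : Complex.exp (Complex.I * ((θ:ℂ) * (Q:ℂ))) = ((-1:ℂ)^a) ^ Q := by
    rw [show Complex.I * ((θ:ℂ) * (Q:ℂ)) = (Q:ℤ) * ((θ:ℂ) * Complex.I) by push_cast; ring,
      Complex.exp_int_mul, hθ]
  have h2 : zet r ^ (a * (R.toNat % r)) = (zet r ^ a) ^ R := by
    rw [hmod, pow_mul, ← zpow_natCast, htn]
  have h3 : (zet r ^ a) ^ ((r:ℤ) * Q) = ((-1:ℂ)^a) ^ Q := by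
    rw [zpow_mul, zpow_natCast, ← pow_mul, zet_pow_mul_r]
  rw [h1, h2, ww, hn, zpow_add₀ (pow_ne_zero _ (zet_ne r)), h3]

lemma floquet_eval (θ : ℝ) (a₁ a₂ : ℕ) (hθ₁ : Complex.exp (θ * Complex.I) = (-1:ℂ)^a₁)
    (hθ₂ : Complex.exp (θ * Complex.I) = (-1:ℂ)^a₂) (x y : ℤ) :
    floquetExt r r θ θ (fun ab => zet r ^ (a₁ * ab.1.val + a₂ * ab.2.val)) (x, y) =
      ww r a₁ x * ww r a₂ y := by
  rw [floquetExt]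
  simp only
  rw [mul_add, Complex.exp_add, pow_add]
  rw [← coord r a₁ θ hθ₁ x, ← coord r a₂ θ hθ₂ y]
  ring

def aa (σ : ℕ) (k : Fin r) : ℕ := 2 * k.val + σ

noncomputable def vv (σ : ℕ) (kl nm : Fin r × Fin r) : ℂ :=
  zet r ^ (aa r σ kl.1 * nm.1.val + aa r σ kl.2 * nm.2.val)

noncomputable def muC (σ : ℕ) (kl : Fin r × Fin r) : ℂ :=
  zet r ^ (aa r σ kl.1) + (zet r ^ (aa r σ kl.1))⁻¹ +
    (zet r ^ (aa r σ kl.2) + (zet r ^ (aa r σ kl.2))⁻¹)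

noncomputable def mu (σ : ℕ) (kl : Fin r × Fin r) : ℝ :=
  2 * Real.cos (Real.pi * (aa r σ kl.1) / r) + 2 * Real.cos (Real.pi * (aa r σ kl.2) / r)

lemma two_cos_eq (a : ℕ) :
    ((2 * Real.cos (Real.pi * a / r) : ℝ) : ℂ) = zet r ^ a + (zet r ^ a)⁻¹ := by
  rw [zet_pow, ← Complex.exp_neg]
  push_cast
  rw [Complex.cos]
  have h1 : (Real.pi:ℂ) * a / r * Complex.I = a * (Real.pi * Complex.I / r) := by ring
  have h2 : -((Real.pi:ℂ) * a / r) * Complex.I = -(a * (Real.pi * Complex.I / r)) := by ring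
  rw [h1, h2]; ring

lemma mu_ofReal (σ : ℕ) (kl : Fin r × Fin r) : ((mu r σ kl : ℝ) : ℂ) = muC r σ kl := by
  rw [mu, muC, Complex.ofReal_add, two_cos_eq, two_cos_eq]

lemma eig (σ : ℕ) (θ : ℝ) (M : Matrix (Fin r × Fin r) (Fin r × Fin r) ℂ)
    (hM : ∀ (ψ : Fin r × Fin r → ℂ) (ab : Fin r × Fin r),
      M.mulVec ψ ab =
        floquetExt r r θ θ ψ ((ab.1 : ℤ) - 1, (ab.2 : ℤ)) +
        floquetExt r r θ θ ψ ((ab.1 : ℤ) + 1, (ab.2 : ℤ)) +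
        floquetExt r r θ θ ψ ((ab.1 : ℤ), (ab.2 : ℤ) - 1) +
        floquetExt r r θ θ ψ ((ab.1 : ℤ), (ab.2 : ℤ) + 1))
    (k l : Fin r) (hθ₁ : Complex.exp (θ * Complex.I) = (-1:ℂ)^(aa r σ k))
    (hθ₂ : Complex.exp (θ * Complex.I) = (-1:ℂ)^(aa r σ l)) (nm : Fin r × Fin r) :
    M.mulVec (fun ab => vv r σ (k, l) ab) nm = muC r σ (k, l) * vv r σ (k, l) nm := by
  have h := hM (fun ab => vv r σ (k, l) ab) nm
  simp only [vv] at h ⊢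
  rw [h,
    floquet_eval r θ _ _ hθ₁ hθ₂, floquet_eval r θ _ _ hθ₁ hθ₂,
    floquet_eval r θ _ _ hθ₁ hθ₂, floquet_eval r θ _ _ hθ₁ hθ₂,
    ww_sub_one, ww_add_one, ww_sub_one, ww_add_one, ww_natCast, ww_natCast, muC, pow_add]
  ring

lemma sum_orth (σ : ℕ) (k k' : Fin r) :
    ∑ n : Fin r, zet r ^ (aa r σ k' * n.val) * (zet r ^ (aa r σ k * n.val))⁻¹ =
      if k' = k then (r:ℂ) else 0 := by
  set d : ℤ := (k'.val : ℤ) - (k.val : ℤ) with hd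
  set c : ℂ := Complex.exp ((d:ℂ) * (2 * Real.pi * Complex.I / r)) with hc
  have hterm : ∀ n : ℕ, zet r ^ (aa r σ k' * n) * (zet r ^ (aa r σ k * n))⁻¹ = c ^ n := by
    intro n
    rw [zet_pow, zet_pow, ← Complex.exp_neg, ← Complex.exp_add, hc, ← Complex.exp_nat_mul]
    congr 1
    push_cast [aa, hd]
    ring
  have hcr : c ^ r = 1 := by
    rw [hc, ← Complex.exp_nat_mul]
    have : (r:ℂ) * ((d:ℂ) * (2 * Real.pi * Complex.I / r)) = (d:ℂ) * (2 * Real.pi * Complex.I) := by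
      field_simp
      exact mul_div_cancel_left₀ _ (rC_ne r)
    rw [this, Complex.exp_int_mul, Complex.exp_two_pi_mul_I, one_zpow]
  by_cases hkk : k' = k
  · subst hkk
    have hc1 : c = 1 := by
      rw [hc, hd]; simp
    simp [hterm, hc1]
  · rw [if_neg hkk]
    have hc1 : c ≠ 1 := by
      intro hc1
      apply hkk
      rw [hc, Complex.exp_eq_one_iff] at hc1
      obtain ⟨j, hj⟩ := hc1
      have h2pi : (2 * (Real.pi:ℂ) * Complex.I) ≠ 0 := by
        simp [Real.pi_ne_zero, Complex.I_ne_zero]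
      have hdj : (d:ℂ) = ((j * r : ℤ):ℂ) := by
        push_cast
        refine mul_right_cancel₀ h2pi ?_
        calc (d:ℂ) * (2 * Real.pi * Complex.I)
            = ((d:ℂ) * (2 * Real.pi * Complex.I / r)) * r := by
              field_simp; exact (mul_div_cancel_right₀ _ (rC_ne r)).symm
          _ = ((j:ℂ) * (2 * Real.pi * Complex.I)) * r := by rw [hj]
          _ = (j:ℂ) * (r:ℂ) * (2 * Real.pi * Complex.I) := by ring
      have hdj' : d = j * r := by exact_mod_cast hdj
      have hk := k.isLt
      have hk' := k'.isLt
      have hb1 : -(r:ℤ) < d := by omega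
      have hb2 : d < (r:ℤ) := by omega
      have hj0 : j = 0 := by
        rcases lt_trichotomy j 0 with h | h | h
        · exfalso
          have : j * (r:ℤ) ≤ (-1) * r := mul_le_mul_of_nonneg_right (by omega) (by omega)
          omega
        · exact h
        · exfalso
          have : (1:ℤ) * r ≤ j * r := mul_le_mul_of_nonneg_right (by omega) (by omega)
          omega
      rw [hj0, zero_mul] at hdj'
      apply Fin.ext
      omega
    rw [Finset.sum_congr rfl (fun n _ => hterm n.val), Fin.sum_univ_eq_sum_range (fun n => c ^ n),
      geom_sum_eq hc1, hcr, sub_self, zero_div]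

noncomputable def PP (σ : ℕ) : Matrix (Fin r × Fin r) (Fin r × Fin r) ℂ :=
  fun nm kl => vv r σ kl nm

noncomputable def QQ (σ : ℕ) : Matrix (Fin r × Fin r) (Fin r × Fin r) ℂ :=
  fun kl nm => (((r:ℂ))^2)⁻¹ * (vv r σ kl nm)⁻¹

lemma QP_one (σ : ℕ) : QQ r σ * PP r σ = 1 := by
  ext ⟨k, l⟩ ⟨k', l'⟩
  rw [Matrix.mul_apply]
  have hterm : ∀ nm : Fin r × Fin r,
      QQ r σ (k, l) nm * PP r σ nm (k', l') =
        ((r:ℂ)^2)⁻¹ * ((zet r ^ (aa r σ k' * nm.1.val) * (zet r ^ (aa r σ k * nm.1.val))⁻¹) *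
          (zet r ^ (aa r σ l' * nm.2.val) * (zet r ^ (aa r σ l * nm.2.val))⁻¹)) := by
    intro nm
    rw [QQ, PP, vv, vv]
    simp only [pow_add, mul_inv]
    ring
  rw [Finset.sum_congr rfl (fun nm _ => hterm nm), ← Finset.mul_sum]
  have hsplit : ∑ nm : Fin r × Fin r,
      (zet r ^ (aa r σ k' * nm.1.val) * (zet r ^ (aa r σ k * nm.1.val))⁻¹) *
        (zet r ^ (aa r σ l' * nm.2.val) * (zet r ^ (aa r σ l * nm.2.val))⁻¹) =
      (∑ x : Fin r, zet r ^ (aa r σ k' * x.val) * (zet r ^ (aa r σ k * x.val))⁻¹) *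
        (∑ y : Fin r, zet r ^ (aa r σ l' * y.val) * (zet r ^ (aa r σ l * y.val))⁻¹) := by
    rw [Finset.sum_mul_sum, Fintype.sum_prod_type]
  rw [hsplit, sum_orth r σ k k', sum_orth r σ l l']
  rw [Matrix.one_apply]
  by_cases h1 : k' = k
  · by_cases h2 : l' = l
    · subst h1; subst h2
      rw [if_pos rfl, if_pos rfl, if_pos rfl]
      field_simp
      rw [div_self (rC_ne r)]
    · rw [if_pos h1, if_neg h2,
        if_neg (show ¬((k,l) = (k',l')) from fun hh => h2 (congrArg Prod.snd hh).symm),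
        mul_zero, mul_zero]
  · rw [if_neg h1,
      if_neg (show ¬((k,l) = (k',l')) from fun hh => h1 (congrArg Prod.fst hh).symm),
      zero_mul, mul_zero]

open Polynomial in
lemma charpoly_PDQ {n : Type*} [Fintype n] [DecidableEq n]
    (P D Q : Matrix n n ℂ) (hPQ : P * Q = 1) (hQP : Q * P = 1) :
    (P * D * Q).charpoly = D.charpoly := by
  let f : Matrix n n ℂ →+* Matrix n n ℂ[X] := (Polynomial.C : ℂ →+* ℂ[X]).mapMatrix
  have hcm : Matrix.charmatrix (P * D * Q) = f P * Matrix.charmatrix D * f Q := by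
    rw [Matrix.charmatrix, Matrix.charmatrix, mul_sub, sub_mul]
    congr 1
    · have hcomm : ∀ M : Matrix n n ℂ[X],
          Matrix.scalar n (X : ℂ[X]) * M = M * Matrix.scalar n (X : ℂ[X]) := fun M =>
        (Matrix.scalar_commute (X : ℂ[X]) (fun r' => Commute.all _ _) M).eq
      rw [← hcomm, mul_assoc, ← map_mul, hPQ, map_one, mul_one]
    · rw [map_mul, map_mul]
  rw [Matrix.charpoly, Matrix.charpoly, hcm, Matrix.det_mul, Matrix.det_mul]
  have hdet : (f P).det * (f Q).det = 1 := by
    rw [← Matrix.det_mul, ← map_mul, hPQ, map_one, Matrix.det_one]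
  calc (f P).det * (Matrix.charmatrix D).det * (f Q).det
      = (Matrix.charmatrix D).det * ((f P).det * (f Q).det) := by ring
    _ = (Matrix.charmatrix D).det := by rw [hdet, mul_one]

open Polynomial in
lemma charpoly_diag {n : Type*} [Fintype n] [DecidableEq n] (d : n → ℂ) :
    (Matrix.diagonal d).charpoly = ∏ i : n, (X - C (d i)) := by
  have hcm : Matrix.charmatrix (Matrix.diagonal d) =
      Matrix.diagonal (fun i => (X : ℂ[X]) - C (d i)) := by
    ext i j
    by_cases h : i = j
    · subst h; simp
    · rw [Matrix.charmatrix_apply_ne _ _ _ h, Matrix.diagonal_apply_ne _ h,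
        Matrix.diagonal_apply_ne _ h, map_zero, neg_zero]
  rw [Matrix.charpoly, hcm, Matrix.det_diagonal]

open Polynomial in
lemma key_charpoly (σ : ℕ) (θ : ℝ) (M : Matrix (Fin r × Fin r) (Fin r × Fin r) ℂ)
    (hM : ∀ (ψ : Fin r × Fin r → ℂ) (ab : Fin r × Fin r),
      M.mulVec ψ ab =
        floquetExt r r θ θ ψ ((ab.1 : ℤ) - 1, (ab.2 : ℤ)) +
        floquetExt r r θ θ ψ ((ab.1 : ℤ) + 1, (ab.2 : ℤ)) +
        floquetExt r r θ θ ψ ((ab.1 : ℤ), (ab.2 : ℤ) - 1) +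
        floquetExt r r θ θ ψ ((ab.1 : ℤ), (ab.2 : ℤ) + 1))
    (hθ : ∀ k : Fin r, Complex.exp (θ * Complex.I) = (-1:ℂ)^(aa r σ k)) :
    M.charpoly = ∏ kl : Fin r × Fin r, (X - C ((mu r σ kl : ℝ) : ℂ)) := by
  have hMP : M * PP r σ = PP r σ * Matrix.diagonal (fun kl => muC r σ kl) := by
    ext nm kl
    rw [Matrix.mul_apply, Matrix.mul_diagonal]
    have h := eig r σ θ M hM kl.1 kl.2 (hθ kl.1) (hθ kl.2) nm
    rw [Matrix.mulVec, dotProduct] at h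
    simpa [PP, mul_comm] using h
  have hQP := QP_one r σ
  have hPQ : PP r σ * QQ r σ = 1 := mul_eq_one_comm.mpr hQP
  have hMeq : M = PP r σ * Matrix.diagonal (fun kl => muC r σ kl) * QQ r σ := by
    calc M = M * (PP r σ * QQ r σ) := by rw [hPQ, Matrix.mul_one]
      _ = (M * PP r σ) * QQ r σ := by rw [Matrix.mul_assoc]
      _ = PP r σ * Matrix.diagonal (fun kl => muC r σ kl) * QQ r σ := by rw [hMP]
  rw [hMeq, charpoly_PDQ _ _ _ hPQ hQP, charpoly_diag]
  exact Finset.prod_congr rfl fun kl _ => by rw [mu_ofReal]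

end FLaux

namespace FLaux2

open Polynomial

lemma roots_prod {α : Type*} [Fintype α] (f : α → ℝ) :
    (∏ i : α, ((X : ℂ[X]) - C ((f i : ℝ) : ℂ))).roots =
      Finset.univ.val.map (fun i => ((f i : ℝ) : ℂ)) := by
  rw [Finset.prod_eq_multiset_prod]
  rw [show Finset.univ.val.map (fun i => (X : ℂ[X]) - C ((f i : ℝ):ℂ)) =
      (Finset.univ.val.map (fun i => ((f i : ℝ):ℂ))).map (fun a => (X : ℂ[X]) - C a) by
    rw [Multiset.map_map]; rfl]
  rw [Polynomial.roots_multiset_prod_X_sub_C]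

lemma multiset_eq {α β : Type*} [Fintype α] [Fintype β] (f : α → ℝ) (g : β → ℝ)
    (h : ∏ i : α, ((X : ℂ[X]) - C ((f i : ℝ) : ℂ)) = ∏ j : β, ((X:ℂ[X]) - C ((g j : ℝ) : ℂ))) :
    Finset.univ.val.map f = Finset.univ.val.map g := by
  have h2 : Finset.univ.val.map (fun i => ((f i : ℝ):ℂ)) =
      Finset.univ.val.map (fun j => ((g j : ℝ):ℂ)) := by
    rw [← roots_prod, ← roots_prod, h]
  apply Multiset.map_injective (Complex.ofReal_injective)
  rw [Multiset.map_map, Multiset.map_map]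
  exact h2

lemma count_lt {α : Type*} [Fintype α] (f : α → ℝ) (E : ℝ) :
    (Finset.univ.filter fun i => f i < E).card =
      Multiset.countP (fun x => x < E) (Finset.univ.val.map f) := by
  rw [Multiset.countP_map, Finset.card_def, Finset.filter_val]

lemma even_card_invol {α : Type*} [DecidableEq α] : ∀ (n : ℕ) (s : Finset α), s.card = n →
    ∀ (f : α → α), (∀ x ∈ s, f x ∈ s) → (∀ x ∈ s, f (f x) = x) → (∀ x ∈ s, f x ≠ x) →
    Even s.card := by
  intro n
  induction n using Nat.strong_induction_on with
  | _ n ih =>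
    intro s hcard f hmem hinv hne
    rcases s.eq_empty_or_nonempty with rfl | ⟨x, hx⟩
    · simp
    · have hfx : f x ∈ s := hmem x hx
      have hxne : f x ≠ x := hne x hx
      set t := s \ {x, f x} with ht
      have hsub : ({x, f x} : Finset α) ⊆ s := by
        intro y hy
        rcases Finset.mem_insert.mp hy with rfl | hy
        · exact hx
        · rw [Finset.mem_singleton] at hy; subst hy; exact hfx
      have hcard2 : ({x, f x} : Finset α).card = 2 := by
        rw [Finset.card_insert_of_notMem (by simpa using (Ne.symm hxne)), Finset.card_singleton]
      have htcard : t.card = s.card - 2 := by rw [ht, Finset.card_sdiff_of_subset hsub, hcard2]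
      have h2le : 2 ≤ s.card := hcard2 ▸ Finset.card_le_card hsub
      have hmt : ∀ y ∈ t, f y ∈ t := by
        intro y hy
        rw [ht, Finset.mem_sdiff] at hy ⊢
        obtain ⟨hys, hynot⟩ := hy
        refine ⟨hmem y hys, ?_⟩
        simp only [Finset.mem_insert, Finset.mem_singleton] at hynot ⊢
        push_neg at hynot ⊢
        refine ⟨fun h => hynot.2 ?_, fun h => hynot.1 ?_⟩
        · exact (hinv y hys).symm.trans (congrArg f h) |>.trans rfl |>.symm ▸ rfl
        · exact ((hinv y hys).symm.trans (congrArg f h)).trans (hinv x hx)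
      have hit : ∀ y ∈ t, f (f y) = y := fun y hy => hinv y (Finset.mem_sdiff.mp hy).1
      have hnt : ∀ y ∈ t, f y ≠ y := fun y hy => hne y (Finset.mem_sdiff.mp hy).1
      have hpos : 0 < s.card := Finset.card_pos.mpr ⟨x, hx⟩
      have hlt : t.card < n := by omega
      have hev := ih t.card hlt t rfl f hmt hit hnt
      have hs2 : s.card = t.card + 2 := by omega
      rw [hs2]
      exact hev.add even_two

end FLaux2

namespace FLaux

variable (r : ℕ) [NeZero r]

lemma rR_ne : (r : ℝ) ≠ 0 := by exact_mod_cast (NeZero.ne r)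

lemma cos_wrap (j : ℕ) (hj : j ≤ 2*r) :
    Real.cos (Real.pi * ((2*r - j : ℕ):ℝ) / r) = Real.cos (Real.pi * j / r) := by
  have hc : ((2*r - j:ℕ):ℝ) = 2*(r:ℝ) - j := by
    rw [Nat.cast_sub hj]; push_cast; ring
  rw [hc, show Real.pi * (2*(r:ℝ) - j)/r = 2*Real.pi - Real.pi*j/r by
    field_simp [rR_ne r]]
  exact Real.cos_two_pi_sub _

lemma mu_pp_inv (k l : Fin r) : mu r 1 (k.rev, l.rev) = mu r 1 (k, l) := by
  have hone : ∀ k : Fin r,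
      Real.cos (Real.pi * (aa r 1 k.rev) / r) = Real.cos (Real.pi * (aa r 1 k)/r) := by
    intro k
    have hk := k.isLt
    have h1 : aa r 1 k.rev = 2*r - aa r 1 k := by
      simp only [aa, Fin.val_rev]
      omega
    rw [h1, cos_wrap r _ (by simp only [aa]; omega)]
  simp only [mu]
  rw [hone k, hone l]

lemma rev_ne (hr : Even r) (k : Fin r) : k.rev ≠ k := by
  intro h
  have h2 := congrArg Fin.val h
  rw [Fin.val_rev] at h2
  have := k.isLt
  have he := Nat.even_iff.mp hr
  omega

def nn (k : Fin r) : Fin r :=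
  ⟨(r - k.val) % r, Nat.mod_lt _ (Nat.pos_of_ne_zero (NeZero.ne r))⟩

lemma nn_val (k : Fin r) : (nn r k).val = if k.val = 0 then 0 else r - k.val := by
  rw [nn]
  dsimp only
  split_ifs with h
  · rw [h, Nat.sub_zero, Nat.mod_self]
  · exact Nat.mod_eq_of_lt (by have := k.isLt; omega)

lemma nn_invol (k : Fin r) : nn r (nn r k) = k := by
  apply Fin.ext
  simp only [nn_val]
  have := k.isLt
  split_ifs <;> omega

lemma mu_00_inv (k l : Fin r) : mu r 0 (nn r k, nn r l) = mu r 0 (k, l) := by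
  have hone : ∀ k : Fin r,
      Real.cos (Real.pi * (aa r 0 (nn r k))/r) = Real.cos (Real.pi * (aa r 0 k)/r) := by
    intro k
    by_cases h : k.val = 0
    · have h2 : nn r k = k := Fin.ext (by rw [nn_val, if_pos h, h])
      rw [h2]
    · have hk := k.isLt
      have h1 : aa r 0 (nn r k) = 2*r - aa r 0 k := by
        simp only [aa, nn_val, if_neg h]
        omega
      rw [h1, cos_wrap r _ (by simp only [aa]; omega)]
  simp only [mu]
  rw [hone k, hone l]

def hf : Fin r := ⟨r/2, by have := Nat.pos_of_ne_zero (NeZero.ne r); omega⟩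

lemma hf_val : (hf r).val = r / 2 := rfl

lemma nn_fix_iff (hr : Even r) (k : Fin r) : nn r k = k ↔ (k = 0 ∨ k = hf r) := by
  have hk := k.isLt
  have he := Nat.even_iff.mp hr
  have hp := Nat.pos_of_ne_zero (NeZero.ne r)
  constructor
  · intro h
    have hv := congrArg Fin.val h
    rw [nn_val] at hv
    by_cases h0 : k.val = 0
    · left; exact Fin.ext (by rw [h0, Fin.val_zero])
    · right
      apply Fin.ext
      rw [hf_val]
      rw [if_neg h0] at hv
      omega
  · rintro (rfl | rfl)
    · apply Fin.ext
      rw [nn_val]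
      simp
    · apply Fin.ext
      rw [nn_val, hf_val]
      split_ifs <;> omega

lemma cos_zero_term : Real.cos (Real.pi * (aa r 0 (0 : Fin r)) / r) = 1 := by
  simp [aa]

lemma cos_hf_term (hr : Even r) : Real.cos (Real.pi * (aa r 0 (hf r)) / r) = -1 := by
  have he := Nat.even_iff.mp hr
  have hp := Nat.pos_of_ne_zero (NeZero.ne r)
  have h1 : (aa r 0 (hf r) : ℝ) = (r : ℝ) := by
    have : aa r 0 (hf r) = r := by simp only [aa, hf_val]; omega
    rw [this]
  rw [h1, mul_div_assoc, div_self (rR_ne r), mul_one, Real.cos_pi]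

lemma hf_ne_zero (hr : Even r) : hf r ≠ 0 := by
  intro h
  have hv := congrArg Fin.val h
  rw [hf_val, Fin.val_zero] at hv
  have he := Nat.even_iff.mp hr
  have hp := Nat.pos_of_ne_zero (NeZero.ne r)
  omega

lemma even_pp (hr : Even r) (E : ℝ) :
    Even (Finset.univ.filter fun kl : Fin r × Fin r => mu r 1 kl < E).card := by
  apply FLaux2.even_card_invol _ _ rfl (fun kl => (kl.1.rev, kl.2.rev))
  · intro x hx
    rw [Finset.mem_filter] at hx ⊢
    refine ⟨Finset.mem_univ _, ?_⟩
    have h := mu_pp_inv r x.1 x.2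
    rw [h, Prod.mk.eta]
    exact hx.2
  · intro x _
    simp [Fin.rev_rev]
  · intro x _ h
    exact rev_ne r hr x.1 (congrArg Prod.fst h)

lemma odd_00 (hr : Even r) (E : ℝ) (hE1 : -4 < E) (hE2 : E < 4) :
    Odd (Finset.univ.filter fun kl : Fin r × Fin r => mu r 0 kl < E).card := by
  classical
  set s := Finset.univ.filter fun kl : Fin r × Fin r => mu r 0 kl < E with hs
  set fix : Fin r × Fin r → Prop := fun kl => (nn r kl.1, nn r kl.2) = kl with hfix
  have hsplit := Finset.card_filter_add_card_filter_not (s := s) (p := fix)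
  have heven : Even ((s.filter fun kl => ¬ fix kl).card) := by
    apply FLaux2.even_card_invol _ _ rfl (fun kl => (nn r kl.1, nn r kl.2))
    · intro x hx
      simp only [Finset.mem_filter, hs, Finset.mem_univ, true_and] at hx ⊢
      obtain ⟨hmu, hnf⟩ := hx
      refine ⟨?_, ?_⟩
      · have h := mu_00_inv r x.1 x.2
        rw [h, Prod.mk.eta]
        exact hmu
      · intro hcon
        apply hnf
        rw [hfix] at hcon ⊢
        simp only at hcon
        rw [nn_invol, nn_invol, Prod.mk.eta] at hcon
        exact hcon.symm
    · intro x _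
      simp [nn_invol]
    · intro x hx
      exact (Finset.mem_filter.mp hx).2
  have hmemiff : ∀ kl : Fin r × Fin r, kl ∈ s.filter fix ↔
      ((kl.1 = 0 ∨ kl.1 = hf r) ∧ (kl.2 = 0 ∨ kl.2 = hf r) ∧ mu r 0 kl < E) := by
    intro kl
    simp only [Finset.mem_filter, hs, Finset.mem_univ, true_and, hfix]
    constructor
    · rintro ⟨hmu, hfx⟩
      exact ⟨(nn_fix_iff r hr kl.1).mp (congrArg Prod.fst hfx),
        (nn_fix_iff r hr kl.2).mp (congrArg Prod.snd hfx), hmu⟩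
    · rintro ⟨h1, h2, hmu⟩
      refine ⟨hmu, ?_⟩
      have e1 : nn r kl.1 = kl.1 := (nn_fix_iff r hr kl.1).mpr h1
      have e2 : nn r kl.2 = kl.2 := (nn_fix_iff r hr kl.2).mpr h2
      rw [e1, e2]
  have hmu00 : mu r 0 ((0:Fin r), (0:Fin r)) = 4 := by
    simp only [mu]
    rw [cos_zero_term]
    ring
  have hmu0h : mu r 0 ((0:Fin r), hf r) = 0 := by
    simp only [mu]
    rw [cos_zero_term, cos_hf_term r hr]
    ring
  have hmuh0 : mu r 0 (hf r, (0:Fin r)) = 0 := by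
    simp only [mu]
    rw [cos_zero_term, cos_hf_term r hr]
    ring
  have hmuhh : mu r 0 (hf r, hf r) = -4 := by
    simp only [mu]
    rw [cos_hf_term r hr]
    ring
  have hodd : Odd ((s.filter fix).card) := by
    by_cases h0 : (0:ℝ) < E
    · have hset : s.filter fix = {((0:Fin r), hf r), (hf r, (0:Fin r)), (hf r, hf r)} := by
        ext kl
        rw [hmemiff]
        simp only [Finset.mem_insert, Finset.mem_singleton]
        constructor
        · rintro ⟨h1 | h1, h2 | h2, hmu⟩
          · exfalso
            rw [show kl = ((0:Fin r),(0:Fin r)) from Prod.ext_iff.mpr ⟨h1, h2⟩, hmu00] at hmu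
            linarith
          · exact Or.inl (Prod.ext_iff.mpr ⟨h1, h2⟩)
          · exact Or.inr (Or.inl (Prod.ext_iff.mpr ⟨h1, h2⟩))
          · exact Or.inr (Or.inr (Prod.ext_iff.mpr ⟨h1, h2⟩))
        · rintro (rfl | rfl | rfl)
          · exact ⟨Or.inl rfl, Or.inr rfl, by rw [hmu0h]; exact h0⟩
          · exact ⟨Or.inr rfl, Or.inl rfl, by rw [hmuh0]; exact h0⟩
          · exact ⟨Or.inr rfl, Or.inr rfl, by rw [hmuhh]; linarith⟩
      rw [hset]
      have hne1 : ((0:Fin r), hf r) ≠ (hf r, (0:Fin r)) := by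
        intro h; exact hf_ne_zero r hr (congrArg Prod.fst h).symm
      have hne2 : ((0:Fin r), hf r) ≠ (hf r, hf r) := by
        intro h; exact hf_ne_zero r hr (congrArg Prod.fst h).symm
      have hne3 : (hf r, (0:Fin r)) ≠ (hf r, hf r) := by
        intro h; exact hf_ne_zero r hr (congrArg Prod.snd h).symm
      rw [Finset.card_insert_of_notMem (by simp [hne1, hne2]),
        Finset.card_insert_of_notMem (by simp [hne3]), Finset.card_singleton]
      decide
    · have hset : s.filter fix = {(hf r, hf r)} := by
        ext kl
        rw [hmemiff]
        simp only [Finset.mem_singleton]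
        constructor
        · rintro ⟨h1 | h1, h2 | h2, hmu⟩
          · exfalso
            rw [show kl = ((0:Fin r),(0:Fin r)) from Prod.ext_iff.mpr ⟨h1, h2⟩, hmu00] at hmu
            linarith
          · exfalso
            rw [show kl = ((0:Fin r), hf r) from Prod.ext_iff.mpr ⟨h1, h2⟩, hmu0h] at hmu
            exact h0 hmu
          · exfalso
            rw [show kl = (hf r, (0:Fin r)) from Prod.ext_iff.mpr ⟨h1, h2⟩, hmuh0] at hmu
            exact h0 hmu
          · exact Prod.ext_iff.mpr ⟨h1, h2⟩
        · rintro rfl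
          exact ⟨Or.inr rfl, Or.inr rfl, by rw [hmuhh]; linarith⟩
      rw [hset, Finset.card_singleton]
      decide
  rw [← hsplit]
  exact hodd.add_even heven

lemma mem_Cr (a : ℕ) (ha : a ≤ 2*r) :
    ∃ j : ℕ, j ≤ r ∧ 2*Real.cos (Real.pi * a / r) = 2*Real.cos (Real.pi * j / r) := by
  by_cases h : a ≤ r
  · exact ⟨a, h, rfl⟩
  · refine ⟨2*r - a, by omega, ?_⟩
    rw [cos_wrap r a ha]

lemma mu_mem (σ : ℕ) (kl : Fin r × Fin r) (hσ : σ ≤ 1) :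
    mu r σ kl ∈ {x : ℝ | ∃ a ∈ {y : ℝ | ∃ j : ℕ, j ≤ r ∧ y = 2 * Real.cos (Real.pi * j / r)},
      ∃ b ∈ {y : ℝ | ∃ j : ℕ, j ≤ r ∧ y = 2 * Real.cos (Real.pi * j / r)}, x = a + b} := by
  have h1 := mem_Cr r (aa r σ kl.1) (by have := kl.1.isLt; simp only [aa]; omega)
  have h2 := mem_Cr r (aa r σ kl.2) (by have := kl.2.isLt; simp only [aa]; omega)
  obtain ⟨j1, hj1, he1⟩ := h1
  obtain ⟨j2, hj2, he2⟩ := h2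
  exact ⟨_, ⟨j1, hj1, rfl⟩, _, ⟨j2, hj2, rfl⟩, by rw [mu, he1, he2]⟩

open Polynomial in
lemma not_in_spectrum (σ : ℕ) (M : Matrix (Fin r × Fin r) (Fin r × Fin r) ℂ) (E : ℝ)
    (hcp : M.charpoly = ∏ kl : Fin r × Fin r, (X - C ((mu r σ kl : ℝ) : ℂ)))
    (hne : ∀ kl, E ≠ mu r σ kl) : (E : ℂ) ∉ spectrum ℂ M := by
  rw [spectrum.mem_iff, not_not, Matrix.isUnit_iff_isUnit_det, isUnit_iff_ne_zero]
  have hdet : (algebraMap ℂ (Matrix (Fin r × Fin r) (Fin r × Fin r) ℂ) (E:ℂ) - M).det =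
      M.charpoly.eval (E:ℂ) := by
    rw [Matrix.charpoly]
    have h1 : Polynomial.eval (E:ℂ) (Matrix.charmatrix M).det =
        (((Polynomial.evalRingHom (E:ℂ)).mapMatrix) (Matrix.charmatrix M)).det := by
      rw [← RingHom.map_det]; rfl
    rw [h1]
    congr 1
    ext i j
    by_cases h : i = j
    · subst h
      simp [Matrix.charmatrix_apply_eq, Matrix.algebraMap_eq_diagonal]
    · simp [Matrix.charmatrix_apply_ne _ _ _ h, Matrix.algebraMap_eq_diagonal,
        Matrix.diagonal_apply_ne _ h]
  rw [hdet, hcp, Polynomial.eval_prod]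
  apply Finset.prod_ne_zero_iff.mpr
  intro kl _
  simp only [Polynomial.eval_sub, Polynomial.eval_X, Polynomial.eval_C]
  intro hz
  exact hne kl (by exact_mod_cast sub_eq_zero.mp hz)

end FLaux


open Polynomial in
/-- for even r, Γ = {0,…,r−1}², and E ∈ (−4,4) outside the exceptional
set C_Γ = C_r + C_r, the number of eigenvalues (with multiplicity) of Δ_{0,0}^Γ below E
is odd, the number of eigenvalues (with multiplicity) of Δ_{π,π}^Γ below E is even, the
two counts differ, and E is an eigenvalue of neither matrix.  Eigenvalues with
multiplicity are encoded as enumerations `lam00`, `lampp` factoring the characteristic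
polynomials. -/
theorem free_laplacian_eigenvalue_counts
    (r : ℕ) [NeZero r] (hr : Even r)
    (M00 Mpp : Matrix (Fin r × Fin r) (Fin r × Fin r) ℂ)
    (hM00 : ∀ (ψ : Fin r × Fin r → ℂ) (ab : Fin r × Fin r),
      M00.mulVec ψ ab =
        floquetExt r r 0 0 ψ ((ab.1 : ℤ) - 1, (ab.2 : ℤ)) +
        floquetExt r r 0 0 ψ ((ab.1 : ℤ) + 1, (ab.2 : ℤ)) +
        floquetExt r r 0 0 ψ ((ab.1 : ℤ), (ab.2 : ℤ) - 1) +
        floquetExt r r 0 0 ψ ((ab.1 : ℤ), (ab.2 : ℤ) + 1))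
    (hMpp : ∀ (ψ : Fin r × Fin r → ℂ) (ab : Fin r × Fin r),
      Mpp.mulVec ψ ab =
        floquetExt r r Real.pi Real.pi ψ ((ab.1 : ℤ) - 1, (ab.2 : ℤ)) +
        floquetExt r r Real.pi Real.pi ψ ((ab.1 : ℤ) + 1, (ab.2 : ℤ)) +
        floquetExt r r Real.pi Real.pi ψ ((ab.1 : ℤ), (ab.2 : ℤ) - 1) +
        floquetExt r r Real.pi Real.pi ψ ((ab.1 : ℤ), (ab.2 : ℤ) + 1))
    (lam00 lampp : Fin (r * r) → ℝ)
    (hcp00 : M00.charpoly = ∏ j : Fin (r * r), (X - C ((lam00 j : ℝ) : ℂ)))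
    (hcppp : Mpp.charpoly = ∏ j : Fin (r * r), (X - C ((lampp j : ℝ) : ℂ)))
    (E : ℝ) (hE : E ∈ Set.Ioo (-4 : ℝ) 4)
    (hEexc : E ∉ {x : ℝ | ∃ a ∈ {y : ℝ | ∃ j : ℕ, j ≤ r ∧ y = 2 * Real.cos (Real.pi * j / r)},
      ∃ b ∈ {y : ℝ | ∃ j : ℕ, j ≤ r ∧ y = 2 * Real.cos (Real.pi * j / r)}, x = a + b}) :
    Odd (Finset.univ.filter fun j : Fin (r * r) => lam00 j < E).card ∧
    Even (Finset.univ.filter fun j : Fin (r * r) => lampp j < E).card ∧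
    (Finset.univ.filter fun j : Fin (r * r) => lam00 j < E).card ≠
      (Finset.univ.filter fun j : Fin (r * r) => lampp j < E).card ∧
    (E : ℂ) ∉ spectrum ℂ M00 ∧ (E : ℂ) ∉ spectrum ℂ Mpp := by
  have hθ0 : ∀ k : Fin r, Complex.exp (((0:ℝ):ℂ) * Complex.I) = (-1:ℂ)^(FLaux.aa r 0 k) := by
    intro k
    rw [FLaux.aa, Complex.ofReal_zero, zero_mul, Complex.exp_zero, add_zero, pow_mul,
      neg_one_sq, one_pow]
  have hθπ : ∀ k : Fin r, Complex.exp (((Real.pi:ℝ):ℂ) * Complex.I) = (-1:ℂ)^(FLaux.aa r 1 k) := by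
    intro k
    rw [FLaux.aa, Complex.exp_pi_mul_I, pow_succ, pow_mul, neg_one_sq, one_pow, one_mul]
  have hA := FLaux.key_charpoly r 0 0 M00 hM00 hθ0
  have hB := FLaux.key_charpoly r 1 Real.pi Mpp hMpp hθπ
  rw [hcp00] at hA
  rw [hcppp] at hB
  have hm0 := FLaux2.multiset_eq _ _ hA
  have hmp := FLaux2.multiset_eq _ _ hB
  have hc0 : (Finset.univ.filter fun j : Fin (r*r) => lam00 j < E).card =
      (Finset.univ.filter fun kl : Fin r × Fin r => FLaux.mu r 0 kl < E).card := by
    rw [FLaux2.count_lt, FLaux2.count_lt, hm0]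
  have hcp : (Finset.univ.filter fun j : Fin (r*r) => lampp j < E).card =
      (Finset.univ.filter fun kl : Fin r × Fin r => FLaux.mu r 1 kl < E).card := by
    rw [FLaux2.count_lt, FLaux2.count_lt, hmp]
  have hne0 : ∀ kl, E ≠ FLaux.mu r 0 kl := by
    intro kl h
    exact hEexc (h ▸ FLaux.mu_mem r 0 kl (by norm_num))
  have hnep : ∀ kl, E ≠ FLaux.mu r 1 kl := by
    intro kl h
    exact hEexc (h ▸ FLaux.mu_mem r 1 kl (by norm_num))
  have hodd : Odd (Finset.univ.filter fun j : Fin (r*r) => lam00 j < E).card := by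
    rw [hc0]; exact FLaux.odd_00 r hr E hE.1 hE.2
  have heven : Even (Finset.univ.filter fun j : Fin (r*r) => lampp j < E).card := by
    rw [hcp]; exact FLaux.even_pp r hr E
  refine ⟨hodd, heven, ?_, ?_, ?_⟩
  · intro he
    have h1 := Nat.odd_iff.mp hodd
    have h2 := Nat.even_iff.mp heven
    omega
  · exact FLaux.not_in_spectrum r 0 M00 E (FLaux.key_charpoly r 0 0 M00 hM00 hθ0) hne0
  · exact FLaux.not_in_spectrum r 1 Mpp E (FLaux.key_charpoly r 1 Real.pi Mpp hMpp hθπ) hnep
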